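/- Let G be the complete graph on n ≥ 2 vertices. Then the resolving topological index of G equals n/2. -/

import Mathlib

open Finset

variable {V : Type*} [Fintype V] [DecidableEq V]

/-- The resolving neighborhood `R(u,v)`: the set of vertices resolving the pair `(u,v)`. -/
noncomputable def resolvingNbhd (G : SimpleGraph V) (u v : V) : Finset V :=
  Finset.univ.filter fun x => G.dist u x ≠ G.dist v x

/-- The resolving share `r_w(u,v)` of a vertex `w` for the pair `(u,v)`. -/
noncomputable def rShare (G : SimpleGraph V) (w u v : V) : ℚ :=
  if G.dist u w ≠ G.dist v w then 1 / (resolvingNbhd G u v).card else 0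

/-- The resolvent neighborhood of `w`, as ordered pairs. Since `rShare` is symmetric
in the pair, averaging over ordered pairs agrees with averaging over unordered pairs. -/
noncomputable def resolventNbhd (G : SimpleGraph V) (w : V) : Finset (V × V) :=
  Finset.univ.filter fun p => p.1 ≠ p.2 ∧ G.dist p.1 w ≠ G.dist p.2 w

/-- The average resolving share `ar_w(G)` of `w` in `G`. -/
noncomputable def arShare (G : SimpleGraph V) (w : V) : ℚ :=
  (∑ p ∈ resolventNbhd G w, rShare G w p.1 p.2) / (resolventNbhd G w).card

/-- The resolving topological index `𝓡(G)`. -/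
noncomputable def rIndex (G : SimpleGraph V) : ℚ :=
  ∑ w : V, arShare G w

lemma cg_dist (n : ℕ) (u x : Fin n) :
    (SimpleGraph.completeGraph (Fin n)).dist u x = if u = x then 0 else 1 := by
  split_ifs with h
  · simp [h]
  · exact (SimpleGraph.dist_eq_one_iff_adj).2 h

lemma rn_card (n : ℕ) (u v : Fin n) (h : u ≠ v) :
    (resolvingNbhd (SimpleGraph.completeGraph (Fin n)) u v).card = 2 := by
  have : resolvingNbhd (SimpleGraph.completeGraph (Fin n)) u v = {u, v} := by
    ext x
    simp only [resolvingNbhd, mem_filter, mem_univ, true_and, mem_insert, mem_singleton,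
      cg_dist]
    constructor
    · intro hx
      by_contra hc
      push_neg at hc
      simp [Ne.symm hc.1, Ne.symm hc.2] at hx
    · rintro (rfl | rfl) <;> simp [h, h.symm]
  rw [this, card_insert_of_notMem (by simpa using h), card_singleton]

/-- The resolving topological index of the complete graph on `n ≥ 2` vertices
is `n/2`. -/
theorem rIndex_completeGraph (n : ℕ) (hn : 2 ≤ n) :
    rIndex (SimpleGraph.completeGraph (Fin n)) = (n : ℚ) / 2 := by
  have har : ∀ w : Fin n, arShare (SimpleGraph.completeGraph (Fin n)) w = 1 / 2 := by
    intro w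
    have hsum : ∑ p ∈ resolventNbhd (SimpleGraph.completeGraph (Fin n)) w,
        rShare (SimpleGraph.completeGraph (Fin n)) w p.1 p.2
        = (resolventNbhd (SimpleGraph.completeGraph (Fin n)) w).card * (1 / 2) := by
      rw [Finset.sum_congr rfl (fun p hp => ?_), Finset.sum_const, nsmul_eq_mul]
      simp only [resolventNbhd, mem_filter, mem_univ, true_and] at hp
      rw [rShare, if_pos hp.2, rn_card n _ _ hp.1]
      norm_num
    have hne : (resolventNbhd (SimpleGraph.completeGraph (Fin n)) w).card ≠ 0 := by
      obtain ⟨v, hv⟩ := Fintype.exists_ne_of_one_lt_card (by simp; omega) w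
      have : (w, v) ∈ resolventNbhd (SimpleGraph.completeGraph (Fin n)) w := by
        simp only [resolventNbhd, mem_filter, mem_univ, true_and]
        refine ⟨Ne.symm hv, ?_⟩
        rw [cg_dist, cg_dist, if_pos rfl, if_neg hv]
        simp
      exact Finset.card_ne_zero_of_mem this
    rw [arShare, hsum, mul_comm, mul_div_assoc, div_self (by exact_mod_cast hne), mul_one]
  rw [rIndex, Finset.sum_congr rfl (fun w _ => har w), Finset.sum_const]
  simp
  ring
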